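/- Let G be a finite group, A ≤ G a subgroup of index 2, and χ : G × G → ℂˣ a map satisfying the twisted bicocycle conditions χ(a, bc) = χ(a,b) · σ_b(χ(a,c)) and χ(ab, c) = σ_b(χ(a,c)) · χ(b,c), where σ_b is complex conjugation if b ∉ A and the identity if b ∈ A. Suppose the restriction of χ to A × A is a nondegenerate bicharacter. Then: (1) every element w ∈ G \ A satisfies w² = 1, so the extension A → G → ℤ/2ℤ splits; and (2) for every w ∈ G \ A and a ∈ A, w a w = a⁻¹. Hence G is a generalized dihedral group A ⋊ ℤ/2ℤ with ℤ/2ℤ acting by inversion. -/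

import Mathlib

theorem twisted_bicocycle_forces_generalized_dihedral
    (G : Type*) [Group G] [Finite G] (A : Subgroup G) [DecidablePred (· ∈ A)]
    (hA : A.index = 2) (χ : G → G → ℂ) (hne : ∀ a b : G, χ a b ≠ 0)
    (hcoc1 : ∀ a b c : G,
      χ a (b * c) = χ a b * (if b ∈ A then χ a c else (starRingEnd ℂ) (χ a c)))
    (hcoc2 : ∀ a b c : G,
      χ (a * b) c = (if b ∈ A then χ a c else (starRingEnd ℂ) (χ a c)) * χ b c)
    (hnd : ∀ a ∈ A, (∀ b ∈ A, χ a b = 1) → a = 1) :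
    (∀ w : G, w ∉ A → w ^ 2 = 1) ∧
    (∀ w : G, w ∉ A → ∀ a ∈ A, w * a * w = a⁻¹) := by
  have chi_one : ∀ a : G, χ a 1 = 1 := by
    intro a
    have h := hcoc1 a 1 1
    simp only [one_mem, if_true, mul_one] at h
    have h' : χ a 1 * 1 = χ a 1 * χ a 1 := by rw [mul_one]; exact h
    exact (mul_left_cancel₀ (hne a 1) h').symm
  have chi_pow : ∀ x b : G, b ∈ A → ∀ n : ℕ, χ x (b ^ n) = χ x b ^ n := by
    intro x b hb n
    induction n with
    | zero => simpa using chi_one x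
    | succ n ih =>
      rw [pow_succ', pow_succ']
      have h := hcoc1 x b (b ^ n)
      rw [if_pos hb] at h
      rw [h, ih]
  have mod_one : ∀ x b : G, b ∈ A → (starRingEnd ℂ) (χ x b) * χ x b = 1 := by
    intro x b hb
    have hn : orderOf b ≠ 0 := (orderOf_pos b).ne'
    have hz : χ x b ^ orderOf b = 1 := by
      rw [← chi_pow x b hb, pow_orderOf_eq_one, chi_one]
    have hnorm : ‖χ x b‖ = 1 := Complex.norm_eq_one_of_pow_eq_one hz hn
    have := Complex.mul_conj (χ x b)
    rw [mul_comm] at this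
    rw [this, Complex.normSq_eq_norm_sq, hnorm]
    norm_num
  have mulA := fun {a b : G} => Subgroup.mul_mem_iff_of_index_two (H := A) hA (a := a) (b := b)
  constructor
  · intro w hw
    have hww : w * w ∈ A := mulA.mpr (by tauto)
    have : ∀ c ∈ A, χ (w * w) c = 1 := by
      intro c hc
      have h := hcoc2 w w c
      rw [if_neg hw] at h
      rw [h, mod_one w c hc]
    have := hnd _ hww this
    rwa [pow_two]
  · intro w hw a ha
    have hwa : w * a ∉ A := fun h => hw (by
      have := mulA.mp h; tauto)
    have hwaw : w * a * w ∈ A := mulA.mpr (by tauto)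
    have ht : w * a * w * a ∈ A := mulA.mpr (by tauto)
    have key : ∀ c ∈ A, χ (w * a * w * a) c = 1 := by
      intro c hc
      have h1 : χ (w * a) c = χ w c * χ a c := by
        have h := hcoc2 w a c; rwa [if_pos ha] at h
      have h2 : χ (w * a * w) c = (starRingEnd ℂ) (χ a c) := by
        have h := hcoc2 (w * a) w c
        rw [if_neg hw, h1, map_mul] at h
        rw [h]
        have := mod_one w c hc
        ring_nf
        ring_nf at this
        rw [mul_comm] at this ⊢
        calc χ w c * ((starRingEnd ℂ) (χ w c) * (starRingEnd ℂ) (χ a c))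
            = ((starRingEnd ℂ) (χ w c) * χ w c) * (starRingEnd ℂ) (χ a c) := by ring
          _ = (starRingEnd ℂ) (χ a c) := by rw [mod_one w c hc, one_mul]
      have h := hcoc2 (w * a * w) a c
      rw [if_pos ha, h2] at h
      rw [h, mod_one a c hc]
    have := hnd _ ht key
    exact eq_inv_of_mul_eq_one_left this
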